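/- Let μ₁, μ₂, ν₁, ν₂ be finite nonnegative compactly supported Borel measures on ℝ with μ₁(ℝ) = ν₁(ℝ) and μ₂(ℝ) = ν₂(ℝ). Then W_ℝ(μ₁+μ₂, ν₁+ν₂) ≤ W_ℝ(μ₁, ν₁) + W_ℝ(μ₂, ν₂). If moreover μ₁ ⪯ μ₂ and ν₁ ⪯ ν₂, i.e. x₁ ≤ x₂ for (μ₁⊗μ₂)-almost every (x₁, x₂) and y₁ ≤ y₂ for (ν₁⊗ν₂)-almost every (y₁, y₂), then equality holds: W_ℝ(μ₁+μ₂, ν₁+ν₂) = W_ℝ(μ₁, ν₁) + W_ℝ(μ₂, ν₂). -/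

import Mathlib

open MeasureTheory Set Filter
open scoped ENNReal Classical Topology

noncomputable section

/-- Optimal-transport cost with cost function `c`. -/
noncomputable def OTC {A B : Type*} [MeasurableSpace A] [MeasurableSpace B]
    (c : A → B → ℝ≥0∞) (α : Measure A) (β : Measure B) : ℝ≥0∞ :=
  ⨅ (γ : Measure (A × B)) (_ : γ.map Prod.fst = α) (_ : γ.map Prod.snd = β),
    ∫⁻ p, c p.1 p.2 ∂γ

/-- Wasserstein-1 distance. -/
noncomputable def W1 {S : Type*} [MeasurableSpace S] [PseudoEMetricSpace S]
    (α β : Measure S) : ℝ≥0∞ :=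
  OTC edist α β

namespace Stmt16Aux

/-- Symmetric truncated difference in `ℝ≥0∞`. -/
def Dp (a b : ℝ≥0∞) : ℝ≥0∞ := (a - b) + (b - a)

lemma Dp_comm (a b : ℝ≥0∞) : Dp a b = Dp b a := add_comm _ _

lemma Dp_add {a1 b1 a2 b2 : ℝ≥0∞} (hb1 : b1 ≠ ∞) (hb2 : b2 ≠ ∞)
    (h1 : b1 ≤ a1) (h2 : b2 ≤ a2) :
    Dp (a1 + a2) (b1 + b2) = Dp a1 b1 + Dp a2 b2 := by
  unfold Dp
  rw [tsub_eq_zero_of_le (add_le_add h1 h2), tsub_eq_zero_of_le h1, tsub_eq_zero_of_le h2,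
    add_zero, add_zero, add_zero]
  have : a1 + a2 = (a1 - b1) + (a2 - b2) + (b1 + b2) := by
    rw [add_add_add_comm, tsub_add_cancel_of_le h1, tsub_add_cancel_of_le h2]
  exact ENNReal.sub_eq_of_eq_add (by simp [hb1, hb2]) this

/-- an "area between CDFs" functional. -/
def LL (α β : Measure ℝ) : ℝ≥0∞ := ∫⁻ t, Dp (α (Iic t)) (β (Iic t))

lemma measurable_cdf (α : Measure ℝ) : Measurable fun t => α (Iic t) := by
  have h : Monotone fun t => α (Iic t) := fun _ _ hab => measure_mono (Iic_subset_Iic.mpr hab)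
  exact h.measurable

/-- indicator `1_{u ≤ t}`. -/
def chi (u t : ℝ) : ℝ≥0∞ := if u ≤ t then 1 else 0

lemma chi_sub (u v t : ℝ) :
    chi u t - chi v t = Set.indicator (Ico u v) (fun _ => (1 : ℝ≥0∞)) t := by
  unfold chi
  rw [Set.indicator_apply]
  by_cases h1 : u ≤ t <;> by_cases h2 : v ≤ t
  · simp [mem_Ico, h1, h2, not_lt.mpr h2]
  · simp [mem_Ico, h1, h2, not_le.mp h2]
  · simp [mem_Ico, h1, h2, zero_tsub]
  · simp [mem_Ico, h1, h2, zero_tsub]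

lemma chi_sub_Ioc (a b s : ℝ) :
    chi s a - chi s b = Set.indicator (Ioc b a) (fun _ => (1 : ℝ≥0∞)) s := by
  unfold chi
  rw [Set.indicator_apply]
  by_cases h1 : s ≤ a <;> by_cases h2 : s ≤ b
  · simp [mem_Ioc, h1, h2, not_lt.mpr h2]
  · simp [mem_Ioc, h1, h2, not_le.mp h2]
  · simp [mem_Ioc, h1, h2, zero_tsub]
  · simp [mem_Ioc, h1, h2, zero_tsub]

lemma measurable_chi_left (u : ℝ) : Measurable fun t => chi u t := by
  unfold chi
  exact Measurable.ite (measurableSet_le measurable_const measurable_id)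
    measurable_const measurable_const

lemma measurable_chi {X : Type*} [MeasurableSpace X] {f g : X → ℝ}
    (hf : Measurable f) (hg : Measurable g) : Measurable fun x => chi (f x) (g x) := by
  unfold chi
  exact Measurable.ite (measurableSet_le hf hg) measurable_const measurable_const

lemma lintegral_chi_sub (u v : ℝ) :
    ∫⁻ t, (chi u t - chi v t) = ENNReal.ofReal (v - u) := by
  simp_rw [chi_sub]
  rw [lintegral_indicator measurableSet_Ico]
  simp [Real.volume_Ico]

lemma lintegral_g (u v : ℝ) :
    ∫⁻ t, ((chi u t - chi v t) + (chi v t - chi u t)) = edist u v := by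
  have hme : Measurable fun t => chi u t - chi v t :=
    (measurable_chi_left u).sub (measurable_chi_left v)
  rw [lintegral_add_left hme, lintegral_chi_sub, lintegral_chi_sub, edist_dist, Real.dist_eq]
  rcases le_total u v with h | h
  · rw [ENNReal.ofReal_eq_zero.mpr (by linarith : u - v ≤ 0), add_zero,
      abs_of_nonpos (by linarith : u - v ≤ 0), neg_sub]
  · rw [ENNReal.ofReal_eq_zero.mpr (by linarith : v - u ≤ 0), zero_add,
      abs_of_nonneg (by linarith : 0 ≤ u - v)]

lemma ofReal_toReal_sub {x y : ℝ≥0∞} (hx : x ≠ ∞) (hy : y ≠ ∞) :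
    ENNReal.ofReal (x.toReal - y.toReal) = x - y := by
  rcases le_total x y with h | h
  · rw [tsub_eq_zero_of_le h,
      ENNReal.ofReal_eq_zero.mpr (sub_nonpos.mpr (ENNReal.toReal_mono hy h))]
  · rw [← ENNReal.toReal_sub_of_le h hx,
      ENNReal.ofReal_toReal (ne_top_of_le_ne_top hx tsub_le_self)]

lemma lintegral_chi_marginal {γ : Measure (ℝ × ℝ)} {f : ℝ × ℝ → ℝ} (hf : Measurable f) (t : ℝ) :
    ∫⁻ p, chi (f p) t ∂γ = γ.map f (Iic t) := by
  have h : ∫⁻ p, chi (f p) t ∂γ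
      = ∫⁻ p, Set.indicator (f ⁻¹' Iic t) (fun _ => (1 : ℝ≥0∞)) p ∂γ := by
    refine lintegral_congr fun p => ?_
    rw [Set.indicator_apply]
    rfl
  rw [h, lintegral_indicator (hf measurableSet_Iic), setLIntegral_one,
    Measure.map_apply hf measurableSet_Iic]

/-- Lemma A: the CDF functional is a lower bound for the cost of any coupling. -/
lemma LL_le_cost (α β : Measure ℝ) [IsFiniteMeasure α] (γ : Measure (ℝ × ℝ))
    (h1 : γ.map Prod.fst = α) (h2 : γ.map Prod.snd = β) :
    LL α β ≤ ∫⁻ p, edist p.1 p.2 ∂γ := by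
  haveI : IsFiniteMeasure γ := by
    constructor
    have : γ univ = α univ := by
      rw [← h1, Measure.map_apply measurable_fst MeasurableSet.univ]
      rfl
    rw [this]; exact measure_lt_top α univ
  have hrw : ∀ p : ℝ × ℝ, edist p.1 p.2
      = ∫⁻ t, ((chi p.1 t - chi p.2 t) + (chi p.2 t - chi p.1 t)) :=
    fun p => (lintegral_g p.1 p.2).symm
  calc LL α β ≤ ∫⁻ t, ∫⁻ p, ((chi p.1 t - chi p.2 t) + (chi p.2 t - chi p.1 t)) ∂γ := by
        refine lintegral_mono fun t => ?_
        have hA : ∫⁻ p, chi (p : ℝ × ℝ).1 t ∂γ = α (Iic t) := by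
          rw [lintegral_chi_marginal measurable_fst, h1]
        have hB : ∫⁻ p, chi (p : ℝ × ℝ).2 t ∂γ = β (Iic t) := by
          rw [lintegral_chi_marginal measurable_snd, h2]
        have m1 : Measurable fun p : ℝ × ℝ => chi p.1 t :=
          measurable_chi measurable_fst measurable_const
        have m2 : Measurable fun p : ℝ × ℝ => chi p.2 t :=
          measurable_chi measurable_snd measurable_const
        rw [lintegral_add_left (show Measurable fun p : ℝ × ℝ => chi p.1 t - chi p.2 t from m1.sub m2)]
        refine add_le_add ?_ ?_
        · rw [← hA, ← hB, tsub_le_iff_right, ← lintegral_add_left (show Measurable fun p : ℝ × ℝ => chi p.1 t - chi p.2 t from m1.sub m2)]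
          exact lintegral_mono fun p => le_tsub_add
        · rw [← hA, ← hB, tsub_le_iff_right, ← lintegral_add_left (show Measurable fun p : ℝ × ℝ => chi p.2 t - chi p.1 t from m2.sub m1)]
          exact lintegral_mono fun p => le_tsub_add
    _ = ∫⁻ p, ∫⁻ t, ((chi p.1 t - chi p.2 t) + (chi p.2 t - chi p.1 t)) ∂volume ∂γ := by
        refine (lintegral_lintegral_swap ?_).symm
        have m1 : Measurable fun q : (ℝ × ℝ) × ℝ => chi q.1.1 q.2 :=
          measurable_chi (measurable_fst.comp measurable_fst) measurable_snd
        have m2 : Measurable fun q : (ℝ × ℝ) × ℝ => chi q.1.2 q.2 :=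
          measurable_chi (measurable_snd.comp measurable_fst) measurable_snd
        exact ((m1.sub m2).add (m2.sub m1)).aemeasurable
    _ = ∫⁻ p, edist p.1 p.2 ∂γ := by
        exact lintegral_congr fun p => (hrw p).symm

lemma support_bound (α : Measure ℝ) (hK : ∃ K, IsCompact K ∧ α Kᶜ = 0) :
    ∃ R : ℝ, (∀ t, t < -R → α (Iic t) = 0) ∧ (∀ t, R ≤ t → α (Iic t) = α univ) := by
  obtain ⟨K, hKc, hK0⟩ := hK
  obtain ⟨R, hR⟩ : ∃ R, K ⊆ Icc (-R) R := by
    obtain ⟨r, hr⟩ := hKc.isBounded.subset_closedBall 0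
    refine ⟨r, ?_⟩
    rwa [Real.closedBall_eq_Icc, zero_sub, zero_add] at hr
  refine ⟨R, fun t ht => ?_, fun t ht => ?_⟩
  · refine measure_mono_null (fun y hy => ?_) hK0
    intro hyK
    have h1 := (hR hyK).1
    have h2 : y ≤ t := hy
    linarith
  · have h0 : α (Ioi t) = 0 := by
      refine measure_mono_null (fun y hy => ?_) hK0
      intro hyK
      have h1 := (hR hyK).2
      have h2 : t < y := hy
      linarith
    have := measure_add_measure_compl (μ := α) (measurableSet_Iic (a := t))
    rwa [compl_Iic, h0, add_zero] at this

/-- quantile function (with clamping parameter `R`). -/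
def qf (α : Measure ℝ) (R s : ℝ) : ℝ :=
  sInf ({t | t ∈ Icc (-R) R ∧ s ≤ (α (Iic t)).toReal} ∪ {R})

lemma qf_nonempty (α : Measure ℝ) (R s : ℝ) :
    ({t | t ∈ Icc (-R) R ∧ s ≤ (α (Iic t)).toReal} ∪ {R}).Nonempty :=
  ⟨R, Or.inr rfl⟩

lemma qf_bddBelow (α : Measure ℝ) (R s : ℝ) :
    BddBelow ({t | t ∈ Icc (-R) R ∧ s ≤ (α (Iic t)).toReal} ∪ {R}) := by
  refine ⟨min (-R) R, fun x hx => ?_⟩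
  rcases hx with ⟨⟨h, _⟩, _⟩ | h
  · exact le_trans (min_le_left _ _) h
  · rw [mem_singleton_iff] at h
    rw [h]; exact min_le_right _ _

lemma qf_mono (α : Measure ℝ) (R : ℝ) : Monotone (qf α R) := by
  intro s1 s2 h
  refine csInf_le_csInf (qf_bddBelow α R s1) (qf_nonempty α R s2) ?_
  rintro x (⟨hx, hsx⟩ | hx)
  · exact Or.inl ⟨hx, le_trans h hsx⟩
  · exact Or.inr hx

lemma qf_le_iff (α : Measure ℝ) (R : ℝ) [IsFiniteMeasure α]
    (hlow : ∀ t, t < -R → α (Iic t) = 0) (hfull : ∀ t, R ≤ t → α (Iic t) = α univ)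
    {s : ℝ} (hs : 0 < s) (hsm : s ≤ (α univ).toReal) (t : ℝ) :
    qf α R s ≤ t ↔ s ≤ (α (Iic t)).toReal := by
  have hR0 : (0 : ℝ) ≤ R := by
    by_contra hc
    push_neg at hc
    have h1 := hfull R le_rfl
    have h2 := hlow R (by linarith)
    rw [h1] at h2
    rw [h2] at hsm
    simp at hsm
    linarith
  constructor
  · intro hle
    have key : s ≤ (α (Iic (qf α R s))).toReal := by
      set x := qf α R s with hx
      have step : ∀ ε : ℝ, 0 < ε → s ≤ (α (Iic (x + ε))).toReal := by
        intro ε hε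
        obtain ⟨v, hv, hvlt⟩ :=
          exists_lt_of_csInf_lt (qf_nonempty α R s) (lt_add_of_pos_right x hε)
        have hsv : s ≤ (α (Iic v)).toReal := by
          rcases hv with ⟨_, h⟩ | h
          · exact h
          · rw [mem_singleton_iff] at h
            rw [h, hfull R le_rfl]
            exact hsm
        exact hsv.trans (ENNReal.toReal_mono (measure_ne_top _ _)
          (measure_mono (Iic_subset_Iic.mpr hvlt.le)))
      have hiInter : ⋂ n : ℕ, Iic (x + 1 / ((n : ℝ) + 1)) = Iic x := by
        ext y
        simp only [mem_iInter, mem_Iic]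
        constructor
        · intro h
          by_contra hc
          push_neg at hc
          obtain ⟨n, hn⟩ := exists_nat_one_div_lt (by linarith : (0 : ℝ) < y - x)
          have := h n
          linarith
        · intro h n
          have : (0 : ℝ) < 1 / ((n : ℝ) + 1) := by positivity
          linarith
      have hmono : Antitone fun n : ℕ => Iic (x + 1 / ((n : ℝ) + 1)) := by
        intro n m hnm
        refine Iic_subset_Iic.mpr (add_le_add_right ?_ x)
        exact one_div_le_one_div_of_le (by positivity) (by exact_mod_cast by omega)
      have hlim : Tendsto (fun n : ℕ => α (Iic (x + 1 / ((n : ℝ) + 1)))) atTop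
          (𝓝 (α (Iic x))) := by
        have h := tendsto_measure_iInter_atTop (μ := α)
          (fun n => measurableSet_Iic.nullMeasurableSet) hmono ⟨0, measure_ne_top _ _⟩
        rw [hiInter] at h
        exact h
      have hlimR : Tendsto (fun n : ℕ => (α (Iic (x + 1 / ((n : ℝ) + 1)))).toReal) atTop
          (𝓝 ((α (Iic x)).toReal)) :=
        (ENNReal.tendsto_toReal (measure_ne_top _ _)).comp hlim
      exact ge_of_tendsto' hlimR fun n => step _ (by positivity)
    exact key.trans (ENNReal.toReal_mono (measure_ne_top _ _)
      (measure_mono (Iic_subset_Iic.mpr hle)))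
  · intro hcdf
    rcases le_or_gt R t with h | h
    · exact le_trans (csInf_le (qf_bddBelow α R s) (Or.inr rfl)) h
    · have htR : -R ≤ t := by
        by_contra hc
        push_neg at hc
        rw [hlow t hc] at hcdf
        simp at hcdf
        linarith
      exact csInf_le (qf_bddBelow α R s) (Or.inl ⟨⟨htR, h.le⟩, hcdf⟩)

lemma qf_map (α : Measure ℝ) (R : ℝ) [IsFiniteMeasure α]
    (hlow : ∀ t, t < -R → α (Iic t) = 0) (hfull : ∀ t, R ≤ t → α (Iic t) = α univ) :
    Measure.map (qf α R) (volume.restrict (Ioo 0 (α univ).toReal)) = α := by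
  set m' := (α univ).toReal with hm'
  haveI : IsFiniteMeasure (volume.restrict (Ioo (0 : ℝ) m')) := by
    constructor
    rw [Measure.restrict_apply_univ, Real.volume_Ioo]
    exact ENNReal.ofReal_lt_top
  haveI : IsFiniteMeasure (Measure.map (qf α R) (volume.restrict (Ioo (0 : ℝ) m'))) :=
    Measure.isFiniteMeasure_map _ _
  refine Measure.ext_of_Iic _ _ fun t => ?_
  rw [Measure.map_apply (qf_mono α R).measurable measurableSet_Iic,
    Measure.restrict_apply ((qf_mono α R).measurable measurableSet_Iic)]
  set a := (α (Iic t)).toReal with ha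
  have ham : a ≤ m' := ENNReal.toReal_mono (measure_ne_top _ _) (measure_mono (subset_univ _))
  have hsub1 : qf α R ⁻¹' Iic t ∩ Ioo 0 m' ⊆ Ioc 0 a := by
    rintro s ⟨hs1, hs2⟩
    exact ⟨hs2.1, (qf_le_iff α R hlow hfull hs2.1 hs2.2.le t).mp hs1⟩
  have hsub2 : Ioo 0 a ⊆ qf α R ⁻¹' Iic t ∩ Ioo 0 m' := by
    intro s hs
    have hsm' : s < m' := lt_of_lt_of_le hs.2 ham
    exact ⟨(qf_le_iff α R hlow hfull hs.1 hsm'.le t).mpr hs.2.le, hs.1, hsm'⟩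
  have h1 := measure_mono (μ := (volume : Measure ℝ)) hsub1
  have h2 := measure_mono (μ := (volume : Measure ℝ)) hsub2
  rw [Real.volume_Ioc, sub_zero] at h1
  rw [Real.volume_Ioo, sub_zero] at h2
  have hra : ENNReal.ofReal a = α (Iic t) := ENNReal.ofReal_toReal (measure_ne_top _ _)
  rw [hra] at h1 h2
  exact le_antisymm h1 h2

/-- Lemma B: the Wasserstein distance is at most the CDF functional. -/
lemma W1_le_LL (α β : Measure ℝ) [IsFiniteMeasure α] [IsFiniteMeasure β]
    (hKα : ∃ K, IsCompact K ∧ α Kᶜ = 0) (hKβ : ∃ K, IsCompact K ∧ β Kᶜ = 0)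
    (hm : α univ = β univ) :
    W1 α β ≤ LL α β := by
  obtain ⟨Ra, hlowa, hfulla⟩ := support_bound α hKα
  obtain ⟨Rb, hlowb, hfullb⟩ := support_bound β hKβ
  set R := max Ra Rb with hR
  have hlowa' : ∀ t, t < -R → α (Iic t) = 0 := fun t ht =>
    hlowa t (lt_of_lt_of_le ht (neg_le_neg (le_max_left _ _)))
  have hfulla' : ∀ t, R ≤ t → α (Iic t) = α univ := fun t ht =>
    hfulla t ((le_max_left _ _).trans ht)
  have hlowb' : ∀ t, t < -R → β (Iic t) = 0 := fun t ht =>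
    hlowb t (lt_of_lt_of_le ht (neg_le_neg (le_max_right _ _)))
  have hfullb' : ∀ t, R ≤ t → β (Iic t) = β univ := fun t ht =>
    hfullb t ((le_max_right _ _).trans ht)
  set m' := (α univ).toReal with hm'
  have hmb : (β univ).toReal = m' := by rw [hm', hm]
  set Qa := qf α R with hQadef
  set Qb := qf β R with hQbdef
  have hQa : Measurable Qa := (qf_mono α R).measurable
  have hQb : Measurable Qb := (qf_mono β R).measurable
  have hpair : Measurable fun s => (Qa s, Qb s) := hQa.prodMk hQb
  have hmapa : Measure.map Qa (volume.restrict (Ioo 0 m')) = α :=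
    qf_map α R hlowa' hfulla'
  have hmapb : Measure.map Qb (volume.restrict (Ioo 0 m')) = β := by
    have := qf_map β R hlowb' hfullb'
    rwa [hmb] at this
  set γ := Measure.map (fun s => (Qa s, Qb s)) (volume.restrict (Ioo 0 m')) with hγ
  have hγ1 : γ.map Prod.fst = α := by
    rw [hγ, Measure.map_map measurable_fst hpair]
    exact hmapa
  have hγ2 : γ.map Prod.snd = β := by
    rw [hγ, Measure.map_map measurable_snd hpair]
    exact hmapb
  have hW : W1 α β ≤ ∫⁻ p, edist p.1 p.2 ∂γ := by
    unfold W1 OTC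
    exact iInf_le_of_le γ (iInf_le_of_le hγ1 (iInf_le _ hγ2))
  refine hW.trans ?_
  rw [hγ, lintegral_map measurable_edist hpair]
  have hed : ∫⁻ s in Ioo 0 m', edist (Qa s) (Qb s)
      = ∫⁻ s in Ioo 0 m', ∫⁻ t, ((chi (Qa s) t - chi (Qb s) t) + (chi (Qb s) t - chi (Qa s) t)) :=
    lintegral_congr fun s => (lintegral_g _ _).symm
  rw [hed]
  have hswapm : AEMeasurable (Function.uncurry fun s t =>
      ((chi (Qa s) t - chi (Qb s) t) + (chi (Qb s) t - chi (Qa s) t)))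
      ((volume.restrict (Ioo 0 m')).prod volume) := by
    have m1 : Measurable fun q : ℝ × ℝ => chi (Qa q.1) q.2 :=
      measurable_chi (hQa.comp measurable_fst) measurable_snd
    have m2 : Measurable fun q : ℝ × ℝ => chi (Qb q.1) q.2 :=
      measurable_chi (hQb.comp measurable_fst) measurable_snd
    exact ((m1.sub m2).add (m2.sub m1)).aemeasurable
  rw [lintegral_lintegral_swap hswapm]
  unfold LL
  refine lintegral_mono fun t => ?_
  set a := (α (Iic t)).toReal with ha
  set b := (β (Iic t)).toReal with hb
  have hat : a ≤ m' := ENNReal.toReal_mono (measure_ne_top _ _) (measure_mono (subset_univ _))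
  have hbt : b ≤ m' := by
    rw [← hmb]
    exact ENNReal.toReal_mono (measure_ne_top _ _) (measure_mono (subset_univ _))
  have hcongr : ∀ s ∈ Ioo (0 : ℝ) m',
      ((chi (Qa s) t - chi (Qb s) t) + (chi (Qb s) t - chi (Qa s) t))
      = (Set.indicator (Ioc b a) (fun _ => (1 : ℝ≥0∞)) s
        + Set.indicator (Ioc a b) (fun _ => (1 : ℝ≥0∞)) s) := by
    intro s hs
    have hsb : s ≤ (β univ).toReal := by
      rw [hmb]
      exact hs.2.le
    have hiffa : Qa s ≤ t ↔ s ≤ a := qf_le_iff α R hlowa' hfulla' hs.1 hs.2.le t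
    have hiffb : Qb s ≤ t ↔ s ≤ b := qf_le_iff β R hlowb' hfullb' hs.1 hsb t
    have hQat : chi (Qa s) t = chi s a := if_congr hiffa rfl rfl
    have hQbt : chi (Qb s) t = chi s b := if_congr hiffb rfl rfl
    rw [hQat, hQbt, chi_sub_Ioc, chi_sub_Ioc]
  rw [setLIntegral_congr_fun measurableSet_Ioo hcongr]
  have hind : ∀ u v : ℝ, 0 ≤ v → u ≤ m' →
      ∫⁻ s in Ioo (0:ℝ) m', Set.indicator (Ioc v u) (fun _ => (1 : ℝ≥0∞)) s
        = ENNReal.ofReal (u - v) := by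
    intro u v hv hu
    rw [lintegral_indicator measurableSet_Ioc]
    simp only [lintegral_const, Measure.restrict_restrict measurableSet_Ioc,
      Measure.restrict_apply MeasurableSet.univ, univ_inter, one_mul]
    refine le_antisymm ?_ ?_
    · calc volume (Ioc v u ∩ Ioo 0 m') ≤ volume (Ioc v u) :=
            measure_mono inter_subset_left
        _ = ENNReal.ofReal (u - v) := Real.volume_Ioc
    · calc ENNReal.ofReal (u - v) = volume (Ioo v u) := Real.volume_Ioo.symm
        _ ≤ volume (Ioc v u ∩ Ioo 0 m') := by
            refine measure_mono fun s hs => ⟨⟨hs.1, hs.2.le⟩, lt_of_le_of_lt hv hs.1,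
              lt_of_lt_of_le hs.2 hu⟩
  have hmeas1 : Measurable fun s : ℝ => Set.indicator (Ioc b a) (fun _ => (1 : ℝ≥0∞)) s :=
    measurable_const.indicator measurableSet_Ioc
  rw [lintegral_add_left hmeas1, hind a b ENNReal.toReal_nonneg hat,
    hind b a ENNReal.toReal_nonneg hbt, ofReal_toReal_sub (measure_ne_top _ _) (measure_ne_top _ _),
    ofReal_toReal_sub (measure_ne_top _ _) (measure_ne_top _ _)]
  exact le_rfl

lemma LL_add (μ1 μ2 ν1 ν2 : Measure ℝ) [IsFiniteMeasure μ1] [IsFiniteMeasure μ2]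
    [IsFiniteMeasure ν1] [IsFiniteMeasure ν2]
    (hm1 : μ1 univ = ν1 univ) {c d : ℝ}
    (hc1 : μ1 (Ioi c) = 0) (hc2 : μ2 (Iio c) = 0)
    (hd1 : ν1 (Ioi d) = 0) (hd2 : ν2 (Iio d) = 0) :
    LL (μ1 + μ2) (ν1 + ν2) = LL μ1 ν1 + LL μ2 ν2 := by
  have hfull : ∀ (ρ : Measure ℝ) (x t : ℝ), ρ (Ioi x) = 0 → x ≤ t → ρ (Iic t) = ρ univ := by
    intro ρ x t hx hxt
    have h0 : ρ (Ioi t) = 0 := measure_mono_null (Ioi_subset_Ioi hxt) hx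
    have := measure_add_measure_compl (μ := ρ) (measurableSet_Iic (a := t))
    rwa [compl_Iic, h0, add_zero] at this
  have hzero : ∀ (ρ : Measure ℝ) (x t : ℝ), ρ (Iio x) = 0 → t < x → ρ (Iic t) = 0 :=
    fun ρ x t hx htx => measure_mono_null (Iic_subset_Iio.mpr htx) hx
  have key : ∀ t, Dp ((μ1 + μ2) (Iic t)) ((ν1 + ν2) (Iic t))
      = Dp (μ1 (Iic t)) (ν1 (Iic t)) + Dp (μ2 (Iic t)) (ν2 (Iic t)) := by
    intro t
    rw [Measure.add_apply, Measure.add_apply]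
    rcases le_or_gt c t with hct | htc <;> rcases le_or_gt d t with hdt | htd
    · have h1 : μ1 (Iic t) = ν1 (Iic t) := by
        rw [hfull μ1 c t hc1 hct, hfull ν1 d t hd1 hdt, hm1]
      rcases le_total (ν2 (Iic t)) (μ2 (Iic t)) with h | h
      · exact Dp_add (measure_ne_top _ _) (measure_ne_top _ _) h1.ge h
      · rw [Dp_comm (μ1 (Iic t) + μ2 (Iic t)), Dp_comm (μ1 (Iic t)), Dp_comm (μ2 (Iic t))]
        exact Dp_add (measure_ne_top _ _) (measure_ne_top _ _) h1.le h
    · have h1 : ν1 (Iic t) ≤ μ1 (Iic t) := by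
        rw [hfull μ1 c t hc1 hct, hm1]
        exact measure_mono (subset_univ _)
      have h2 : ν2 (Iic t) ≤ μ2 (Iic t) := by
        rw [hzero ν2 d t hd2 htd]
        exact zero_le
      exact Dp_add (measure_ne_top _ _) (measure_ne_top _ _) h1 h2
    · have h1 : μ1 (Iic t) ≤ ν1 (Iic t) := by
        rw [hfull ν1 d t hd1 hdt, ← hm1]
        exact measure_mono (subset_univ _)
      have h2 : μ2 (Iic t) ≤ ν2 (Iic t) := by
        rw [hzero μ2 c t hc2 htc]
        exact zero_le
      rw [Dp_comm (μ1 (Iic t) + μ2 (Iic t)), Dp_comm (μ1 (Iic t)), Dp_comm (μ2 (Iic t))]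
      exact Dp_add (measure_ne_top _ _) (measure_ne_top _ _) h1 h2
    · have h2 : μ2 (Iic t) = ν2 (Iic t) := by
        rw [hzero μ2 c t hc2 htc, hzero ν2 d t hd2 htd]
      rcases le_total (ν1 (Iic t)) (μ1 (Iic t)) with h | h
      · exact Dp_add (measure_ne_top _ _) (measure_ne_top _ _) h h2.ge
      · rw [Dp_comm (μ1 (Iic t) + μ2 (Iic t)), Dp_comm (μ1 (Iic t)), Dp_comm (μ2 (Iic t))]
        exact Dp_add (measure_ne_top _ _) (measure_ne_top _ _) h h2.le
  unfold LL
  rw [lintegral_congr key]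
  have hmeasD : Measurable fun t => Dp (μ1 (Iic t)) (ν1 (Iic t)) :=
    ((measurable_cdf μ1).sub (measurable_cdf ν1)).add
      ((measurable_cdf ν1).sub (measurable_cdf μ1))
  exact lintegral_add_left hmeasD _

lemma exists_c (μ1 μ2 : Measure ℝ) [IsFiniteMeasure μ1] [IsFiniteMeasure μ2]
    (h1 : μ1 univ ≠ 0) (h2 : μ2 univ ≠ 0)
    (hK2 : ∃ K, IsCompact K ∧ μ2 Kᶜ = 0)
    (hord : ∀ᵐ p ∂(μ1.prod μ2), p.1 ≤ p.2) :
    ∃ c, μ1 (Ioi c) = 0 ∧ μ2 (Iio c) = 0 := by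
  have hset : (μ1.prod μ2) {p : ℝ × ℝ | p.2 < p.1} = 0 := by
    have := hord
    rw [ae_iff] at this
    convert this using 2
    ext p
    simp [not_le]
  have hae : ∀ᵐ x ∂μ1, μ2 (Iio x) = 0 := by
    have hms : MeasurableSet {p : ℝ × ℝ | p.2 < p.1} :=
      measurableSet_lt measurable_snd measurable_fst
    have := (Measure.measure_prod_null hms).mp hset
    refine this.mono fun x hx => ?_
    convert hx using 2 <;> rfl
  set A := {x : ℝ | μ2 (Iio x) = 0} with hA
  have hA1 : μ1 Aᶜ = 0 := by
    rw [ae_iff] at hae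
    convert hae using 2 <;> rfl
  have hAne : A.Nonempty := by
    by_contra hc
    rw [not_nonempty_iff_eq_empty] at hc
    apply h1
    have : Aᶜ = univ := by rw [hc, compl_empty]
    rw [← this]
    exact hA1
  have hAbdd : BddAbove A := by
    obtain ⟨K, hKc, hK0⟩ := hK2
    obtain ⟨R, hR⟩ : ∃ R, K ⊆ Icc (-R) R := by
      obtain ⟨r, hr⟩ := hKc.isBounded.subset_closedBall 0
      refine ⟨r, ?_⟩
      rwa [Real.closedBall_eq_Icc, zero_sub, zero_add] at hr
    refine ⟨R + 1, fun x hx => ?_⟩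
    by_contra hc
    push_neg at hc
    apply h2
    have hsub : univ ⊆ Iio x ∪ Kᶜ := by
      intro y _
      by_cases hy : y ∈ K
      · exact Or.inl (lt_of_le_of_lt ((hR hy).2) (by linarith))
      · exact Or.inr hy
    have hle : μ2 univ ≤ 0 :=
      calc μ2 univ ≤ μ2 (Iio x) + μ2 Kᶜ := le_trans (measure_mono hsub) (measure_union_le _ _)
        _ = 0 := by rw [hx, hK0, add_zero]
    exact le_zero_iff.mp hle
  set c := sSup A with hc
  have hdown : ∀ x y : ℝ, x ≤ y → y ∈ A → x ∈ A := by
    intro x y hxy hy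
    exact measure_mono_null (Iio_subset_Iio hxy) hy
  refine ⟨c, ?_, ?_⟩
  · refine measure_mono_null (fun x hx => ?_) hA1
    intro hxA
    exact absurd (le_csSup hAbdd hxA) (not_le.mpr hx)
  · have hsub : Iio c ⊆ ⋃ n : ℕ, Iio (c - 1 / ((n : ℝ) + 1)) := by
      intro y hy
      obtain ⟨n, hn⟩ := exists_nat_one_div_lt (by linarith [mem_Iio.mp hy] : (0 : ℝ) < c - y)
      exact mem_iUnion.mpr ⟨n, by simp only [mem_Iio]; linarith⟩
    refine measure_mono_null hsub (measure_iUnion_null fun n => ?_)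
    have hc1 : c - 1 / ((n : ℝ) + 1) ∈ A := by
      obtain ⟨x, hxA, hxgt⟩ := exists_lt_of_lt_csSup hAne
        (by
          have : (0:ℝ) < 1 / ((n : ℝ) + 1) := by positivity
          linarith : c - 1 / ((n : ℝ) + 1) < c)
      exact hdown _ _ hxgt.le hxA
    exact hc1

lemma W1_zero : W1 (0 : Measure ℝ) (0 : Measure ℝ) = 0 := by
  refine le_antisymm ?_ zero_le
  unfold W1 OTC
  refine iInf_le_of_le 0 (iInf_le_of_le (Measure.map_zero _) (iInf_le_of_le (Measure.map_zero _) ?_))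
  simp

lemma W1_subadd (μ1 μ2 ν1 ν2 : Measure ℝ) :
    W1 (μ1 + μ2) (ν1 + ν2) ≤ W1 μ1 ν1 + W1 μ2 ν2 := by
  unfold W1 OTC
  simp_rw [ENNReal.iInf_add, ENNReal.add_iInf]
  refine le_iInf fun γ1 => le_iInf fun h11 => le_iInf fun h12 =>
    le_iInf fun γ2 => le_iInf fun h21 => le_iInf fun h22 => ?_
  refine iInf_le_of_le (γ1 + γ2) (iInf_le_of_le ?_ (iInf_le_of_le ?_ ?_))
  · rw [Measure.map_add _ _ measurable_fst, h11, h21]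
  · rw [Measure.map_add _ _ measurable_snd, h12, h22]
  · rw [lintegral_add_measure]

end Stmt16Aux

open Stmt16Aux

/-- one-dimensional subadditivity and ordered additivity of the
Wasserstein-1 distance: always `W(μ₁+μ₂, ν₁+ν₂) ≤ W(μ₁,ν₁) + W(μ₂,ν₂)`, with equality
whenever `μ₁ ⪯ μ₂` and `ν₁ ⪯ ν₂` (i.e. the mass of the first measure lies entirely to the
left of the mass of the second). -/
theorem stmt16 (μ1 μ2 ν1 ν2 : Measure ℝ)
    [IsFiniteMeasure μ1] [IsFiniteMeasure μ2] [IsFiniteMeasure ν1] [IsFiniteMeasure ν2]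
    (hμ1 : ∃ K, IsCompact K ∧ μ1 Kᶜ = 0) (hμ2 : ∃ K, IsCompact K ∧ μ2 Kᶜ = 0)
    (hν1 : ∃ K, IsCompact K ∧ ν1 Kᶜ = 0) (hν2 : ∃ K, IsCompact K ∧ ν2 Kᶜ = 0)
    (hm1 : μ1 univ = ν1 univ) (hm2 : μ2 univ = ν2 univ) :
    W1 (μ1 + μ2) (ν1 + ν2) ≤ W1 μ1 ν1 + W1 μ2 ν2 ∧
    ((∀ᵐ p ∂(μ1.prod μ2), p.1 ≤ p.2) → (∀ᵐ p ∂(ν1.prod ν2), p.1 ≤ p.2) →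
      W1 (μ1 + μ2) (ν1 + ν2) = W1 μ1 ν1 + W1 μ2 ν2) := by
  refine ⟨W1_subadd μ1 μ2 ν1 ν2, fun hordμ hordν => ?_⟩
  refine le_antisymm (W1_subadd μ1 μ2 ν1 ν2) ?_
  rcases eq_or_ne (μ1 univ) 0 with h1 | h1
  · have hμ10 : μ1 = 0 := Measure.measure_univ_eq_zero.mp h1
    have hν10 : ν1 = 0 := Measure.measure_univ_eq_zero.mp (hm1 ▸ h1)
    rw [hμ10, hν10, W1_zero, zero_add, zero_add, zero_add]
  rcases eq_or_ne (μ2 univ) 0 with h2 | h2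
  · have hμ20 : μ2 = 0 := Measure.measure_univ_eq_zero.mp h2
    have hν20 : ν2 = 0 := Measure.measure_univ_eq_zero.mp (hm2 ▸ h2)
    rw [hμ20, hν20, W1_zero, add_zero, add_zero, add_zero]
  have hν1ne : ν1 univ ≠ 0 := hm1 ▸ h1
  have hν2ne : ν2 univ ≠ 0 := hm2 ▸ h2
  obtain ⟨c, hc1, hc2⟩ := exists_c μ1 μ2 h1 h2 hμ2 hordμ
  obtain ⟨d, hd1, hd2⟩ := exists_c ν1 ν2 hν1ne hν2ne hν2 hordν
  have hLW : LL (μ1 + μ2) (ν1 + ν2) ≤ W1 (μ1 + μ2) (ν1 + ν2) := by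
    unfold W1 OTC
    exact le_iInf fun γ => le_iInf fun hγ1 => le_iInf fun hγ2 =>
      LL_le_cost (μ1 + μ2) (ν1 + ν2) γ hγ1 hγ2
  calc W1 μ1 ν1 + W1 μ2 ν2 ≤ LL μ1 ν1 + LL μ2 ν2 :=
        add_le_add (W1_le_LL μ1 ν1 hμ1 hν1 hm1) (W1_le_LL μ2 ν2 hμ2 hν2 hm2)
    _ = LL (μ1 + μ2) (ν1 + ν2) := (LL_add μ1 μ2 ν1 ν2 hm1 hc1 hc2 hd1 hd2).symm
    _ ≤ W1 (μ1 + μ2) (ν1 + ν2) := hLW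

end
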